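/- arXiv:2302.11746 — 2 statements merged into one kernel-verified Lean document; each statement's English description precedes it below -/
import Mathlib

section
/- Let (M, d) be a complete CAT(0) space and X an M-valued random element with E[d(X, u)²] < ∞ for some u ∈ M. Then the Fréchet functional F(μ) = E[d(X, μ)²] has a unique minimizer μ* ∈ M. -/
open MeasureTheory

/-- A (unit-speed) geodesic segment from `p` to `q`, parameterized on `[0, dist p q]`. -/
def IsGeodesicSeg {M : Type*} [MetricSpace M] (γ : ℝ → M) (p q : M) : Prop :=
  γ 0 = p ∧ γ (dist p q) = q ∧
    ∀ s ∈ Set.Icc (0 : ℝ) (dist p q), ∀ t ∈ Set.Icc (0 : ℝ) (dist p q),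
      dist (γ s) (γ t) = |s - t|

/-- Curvature bounded above by `0` via Euclidean comparison triangles. -/
def IsCAT0 (M : Type*) [MetricSpace M] : Prop :=
  ∀ (p q r : M) (γ₁ γ₂ : ℝ → M), IsGeodesicSeg γ₁ p q → IsGeodesicSeg γ₂ p r →
    ∀ (p' q' r' : EuclideanSpace ℝ (Fin 2)) (η₁ η₂ : ℝ → EuclideanSpace ℝ (Fin 2)),
      IsGeodesicSeg η₁ p' q' → IsGeodesicSeg η₂ p' r' →
      dist p' q' = dist p q → dist p' r' = dist p r → dist q' r' = dist q r →
      ∀ s ∈ Set.Icc (0 : ℝ) (dist p q), ∀ t ∈ Set.Icc (0 : ℝ) (dist p r),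
        dist (γ₁ s) (γ₂ t) ≤ dist (η₁ s) (η₂ t)


open MeasureTheory Filter

noncomputable def seg {E : Type*} [NormedAddCommGroup E] [NormedSpace ℝ E]
    (p q : E) (t : ℝ) : E := p + (t / dist p q) • (q - p)

lemma seg_geo {E : Type*} [NormedAddCommGroup E] [NormedSpace ℝ E] (p q : E) :
    IsGeodesicSeg (seg p q) p q := by
  rcases eq_or_ne p q with rfl | hpq
  · refine ⟨by simp [seg], by simp [seg], ?_⟩
    intro s hs t ht
    simp only [dist_self] at hs ht
    have hs0 : s = 0 := le_antisymm hs.2 hs.1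
    have ht0 : t = 0 := le_antisymm ht.2 ht.1
    simp [hs0, ht0]
  · have hd : dist p q ≠ 0 := dist_ne_zero.mpr hpq
    refine ⟨by simp [seg], by simp [seg, div_self hd], ?_⟩
    intro s hs t ht
    have : seg p q s - seg p q t = ((s - t) / dist p q) • (q - p) := by
      simp [seg, sub_div, sub_smul]
    rw [dist_eq_norm, this, norm_smul, norm_div, Real.norm_eq_abs, Real.norm_eq_abs,
      abs_of_nonneg dist_nonneg, ← dist_eq_norm, dist_comm q p]
    field_simp

lemma mid_eq {E : Type*} [NormedAddCommGroup E] [NormedSpace ℝ E] (x y : E) :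
    midpoint ℝ x y = ((1:ℝ)/2) • (x + y) := by
  rw [midpoint_eq_smul_add]
  norm_num

lemma seg_half {E : Type*} [NormedAddCommGroup E] [NormedSpace ℝ E] (p q : E) :
    seg p q (dist p q / 2) = midpoint ℝ p q := by
  rcases eq_or_ne p q with rfl | hpq
  · simp [seg]
  · have hd : dist p q ≠ 0 := dist_ne_zero.mpr hpq
    have h2 : dist p q / 2 / dist p q = (1:ℝ)/2 := by field_simp
    rw [seg, h2, mid_eq]
    module

lemma median {E : Type*} [NormedAddCommGroup E] [InnerProductSpace ℝ E] (p q r : E) :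
    dist p (midpoint ℝ q r) ^ 2
      = dist p q ^ 2 / 2 + dist p r ^ 2 / 2 - dist q r ^ 2 / 4 := by
  have h := parallelogram_law_with_norm ℝ (p - q) (p - r)
  have h1 : p - q + (p - r) = (2:ℝ) • (p - midpoint ℝ q r) := by
    rw [mid_eq]; module
  have h2 : p - q - (p - r) = r - q := by abel
  rw [h1, h2, norm_smul] at h
  simp only [Real.norm_ofNat] at h
  have h3 : ‖r - q‖ = ‖q - r‖ := norm_sub_rev r q
  rw [h3] at h
  simp only [dist_eq_norm]
  nlinarith [h]

noncomputable def pt (x y : ℝ) : EuclideanSpace ℝ (Fin 2) :=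
  (WithLp.equiv 2 (Fin 2 → ℝ)).symm ![x, y]

lemma dist_pt (x₁ y₁ x₂ y₂ : ℝ) :
    dist (pt x₁ y₁) (pt x₂ y₂) = Real.sqrt ((x₁ - x₂) ^ 2 + (y₁ - y₂) ^ 2) := by
  rw [EuclideanSpace.dist_eq]
  simp [pt, Fin.sum_univ_two, Real.dist_eq, sq_abs]

lemma comp_tri {M : Type*} [MetricSpace M] (p q r : M) :
    ∃ p' q' r' : EuclideanSpace ℝ (Fin 2),
      dist p' q' = dist p q ∧ dist p' r' = dist p r ∧ dist q' r' = dist q r := by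
  set b := dist p q with hb
  set c := dist p r with hc
  set a := dist q r with ha
  have hb0 : 0 ≤ b := dist_nonneg
  have hc0 : 0 ≤ c := dist_nonneg
  have ha0 : 0 ≤ a := dist_nonneg
  have t1 : a ≤ b + c := by rw [ha, hb, hc, dist_comm p q]; exact dist_triangle q p r
  have t2 : c ≤ b + a := by rw [ha, hb, hc]; exact dist_triangle p q r
  have t3 : b ≤ c + a := by
    rw [ha, hb, hc, dist_comm q r]; exact dist_triangle p r q
  rcases eq_or_lt_of_le hb0 with hbz | hbp
  · -- b = 0, so a = c
    have hac : a = c := by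
      have hpq : p = q := by rw [← dist_eq_zero, ← hb]; linarith
      rw [ha, hc, hpq]
    refine ⟨pt 0 0, pt 0 0, pt c 0, ?_, ?_, ?_⟩
    · rw [dist_pt]; simp; linarith
    · rw [dist_pt]; simpa using (Real.sqrt_sq hc0)
    · rw [dist_pt, hac]; simpa using (Real.sqrt_sq hc0)
  · set x : ℝ := (b ^ 2 + c ^ 2 - a ^ 2) / (2 * b) with hx
    have hxc : x ^ 2 ≤ c ^ 2 := by
      rw [hx, div_pow, div_le_iff₀ (by positivity)]
      nlinarith [mul_nonneg (mul_nonneg (mul_nonneg (by linarith : (0:ℝ) ≤ a + c - b)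
        (by linarith : (0:ℝ) ≤ a + b - c)) (by linarith : (0:ℝ) ≤ b + c - a))
        (by linarith : (0:ℝ) ≤ a + b + c)]
    set y : ℝ := Real.sqrt (c ^ 2 - x ^ 2) with hy
    have hy2 : y ^ 2 = c ^ 2 - x ^ 2 := Real.sq_sqrt (by linarith)
    have h2bx : 2 * b * x = b ^ 2 + c ^ 2 - a ^ 2 := by
      rw [hx]; field_simp
    refine ⟨pt 0 0, pt b 0, pt x y, ?_, ?_, ?_⟩
    · rw [dist_pt]; simpa using (Real.sqrt_sq hb0)
    · rw [dist_pt]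
      have : (0 - x) ^ 2 + (0 - y) ^ 2 = c ^ 2 := by nlinarith [hy2]
      rw [this, Real.sqrt_sq hc0]
    · rw [dist_pt]
      have : (b - x) ^ 2 + (0 - y) ^ 2 = a ^ 2 := by nlinarith [hy2]
      rw [this, Real.sqrt_sq ha0]

lemma cn {M : Type*} [MetricSpace M]
    (hgeo : ∀ p q : M, ∃ γ : ℝ → M, IsGeodesicSeg γ p q) (hcat : IsCAT0 M) (q r : M) :
    ∃ m : M, ∀ p : M,
      dist p m ^ 2 ≤ dist p q ^ 2 / 2 + dist p r ^ 2 / 2 - dist q r ^ 2 / 4 := by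
  obtain ⟨γ, hγ⟩ := hgeo q r
  refine ⟨γ (dist q r / 2), fun p => ?_⟩
  obtain ⟨γ₂, hγ₂⟩ := hgeo q p
  obtain ⟨q', r', p', e1, e2, e3⟩ := comp_tri q r p
  have key := hcat q r p γ γ₂ hγ hγ₂ q' r' p' (seg q' r') (seg q' p')
    (seg_geo q' r') (seg_geo q' p') e1 e2 e3 (dist q r / 2)
    ⟨by positivity, by linarith [dist_nonneg (x := q) (y := r)]⟩
    (dist q p) ⟨dist_nonneg, le_refl _⟩
  have hγ₂p : γ₂ (dist q p) = p := hγ₂.2.1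
  have hsegp : seg q' p' (dist q p) = p' := by
    have := (seg_geo q' p').2.1; rwa [e2] at this
  have hsegm : seg q' r' (dist q r / 2) = midpoint ℝ q' r' := by
    have := seg_half q' r'; rwa [e1] at this
  rw [hγ₂p, hsegp, hsegm] at key
  have hsq : dist (γ (dist q r / 2)) p ^ 2 ≤ dist (midpoint ℝ q' r') p' ^ 2 := by
    have h0 : (0:ℝ) ≤ dist (γ (dist q r / 2)) p := dist_nonneg
    nlinarith [key, dist_nonneg (x := midpoint ℝ q' r') (y := p')]
  rw [dist_comm (midpoint ℝ q' r') p'] at hsq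
  rw [median p' q' r'] at hsq
  rw [dist_comm p' q', dist_comm p' r', e1, e2, e3] at hsq
  calc dist p (γ (dist q r / 2)) ^ 2 = dist (γ (dist q r / 2)) p ^ 2 := by rw [dist_comm]
    _ ≤ dist q p ^ 2 / 2 + dist r p ^ 2 / 2 - dist q r ^ 2 / 4 := hsq
    _ = dist p q ^ 2 / 2 + dist p r ^ 2 / 2 - dist q r ^ 2 / 4 := by
        rw [dist_comm q p, dist_comm r p]

theorem stmt12 {M Ω : Type*} [MetricSpace M] [CompleteSpace M] [MeasurableSpace M]
    [BorelSpace M] [MeasurableSpace Ω]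
    (hgeo : ∀ p q : M, ∃ γ : ℝ → M, IsGeodesicSeg γ p q) (hcat : IsCAT0 M)
    (P : Measure Ω) [IsProbabilityMeasure P]
    (X : Ω → M) (hX : Measurable X)
    (u : M) (hint : Integrable (fun ω => dist (X ω) u ^ 2) P) :
    ∃! μs : M, ∀ μ : M,
      ∫ ω, dist (X ω) μs ^ 2 ∂P ≤ ∫ ω, dist (X ω) μ ^ 2 ∂P := by
  classical
  set F : M → ℝ := fun μ => ∫ ω, dist (X ω) μ ^ 2 ∂P with hFdef
  -- measurability
  have hm : ∀ μ : M, AEStronglyMeasurable (fun ω => dist (X ω) μ ^ 2) P := fun μ =>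
    (((continuous_id.dist continuous_const).pow 2).measurable.comp hX).aestronglyMeasurable
  -- pointwise bound
  have hptw : ∀ (v μ : M) (ω : Ω),
      dist (X ω) μ ^ 2 ≤ 2 * dist (X ω) v ^ 2 + 2 * dist v μ ^ 2 := by
    intro v μ ω
    have h1 := dist_triangle (X ω) v μ
    have h2 : (0:ℝ) ≤ dist (X ω) μ := dist_nonneg
    nlinarith [sq_nonneg (dist (X ω) v - dist v μ), dist_nonneg (x := X ω) (y := v),
      dist_nonneg (x := v) (y := μ)]
  -- integrability
  have hInt : ∀ μ : M, Integrable (fun ω => dist (X ω) μ ^ 2) P := by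
    intro μ
    refine Integrable.mono' ((hint.const_mul 2).add (integrable_const (2 * dist u μ ^ 2)))
      (hm μ) (ae_of_all _ fun ω => ?_)
    rw [Real.norm_eq_abs, abs_of_nonneg (by positivity)]
    exact hptw u μ ω
  have hF0 : ∀ μ : M, 0 ≤ F μ := fun μ =>
    integral_nonneg fun ω => by positivity
  -- integrated CN inequality
  have hCN : ∀ q r : M, ∃ m : M, F m ≤ F q / 2 + F r / 2 - dist q r ^ 2 / 4 := by
    intro q r
    obtain ⟨m, hmm⟩ := cn hgeo hcat q r
    refine ⟨m, ?_⟩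
    have hq2 : Integrable (fun ω => dist (X ω) q ^ 2 / 2) P := (hInt q).div_const 2
    have hr2 : Integrable (fun ω => dist (X ω) r ^ 2 / 2) P := (hInt r).div_const 2
    have hadd : Integrable (fun ω => dist (X ω) q ^ 2 / 2 + dist (X ω) r ^ 2 / 2) P :=
      hq2.add hr2
    have hintc : Integrable
        (fun ω => dist (X ω) q ^ 2 / 2 + dist (X ω) r ^ 2 / 2 - dist q r ^ 2 / 4) P :=
      hadd.sub (integrable_const _)
    have h1 : F m ≤ ∫ ω, (dist (X ω) q ^ 2 / 2 + dist (X ω) r ^ 2 / 2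
        - dist q r ^ 2 / 4) ∂P :=
      integral_mono (hInt m) hintc fun ω => hmm (X ω)
    rwa [integral_sub hadd (integrable_const _), integral_add hq2 hr2,
      integral_div, integral_div, integral_const, probReal_univ,
      one_smul] at h1
  -- infimum
  have : Nonempty M := ⟨u⟩
  have hbdd : BddBelow (Set.range F) := ⟨0, by rintro x ⟨μ, rfl⟩; exact hF0 μ⟩
  set I : ℝ := ⨅ μ, F μ with hIdef
  have hI_le : ∀ μ : M, I ≤ F μ := fun μ => ciInf_le hbdd μ
  -- minimizing sequence
  have hex : ∀ n : ℕ, ∃ μ : M, F μ < I + 1 / ((n : ℝ) + 1) := by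
    intro n
    have : I < I + 1 / ((n : ℝ) + 1) := by
      have : (0:ℝ) < 1 / ((n : ℝ) + 1) := by positivity
      linarith
    exact exists_lt_of_ciInf_lt (by rwa [← hIdef])
  choose μseq hseq using hex
  -- Cauchy estimate
  have hkey : ∀ n k : ℕ, dist (μseq n) (μseq k) ^ 2
      ≤ 2 / ((n : ℝ) + 1) + 2 / ((k : ℝ) + 1) := by
    intro n k
    obtain ⟨m, hmle⟩ := hCN (μseq n) (μseq k)
    have h1 := hI_le m
    have h2 := hseq n
    have h3 := hseq k
    have e1 : (2:ℝ) / ((n : ℝ) + 1) = 2 * (1 / ((n : ℝ) + 1)) := by ring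
    have e2 : (2:ℝ) / ((k : ℝ) + 1) = 2 * (1 / ((k : ℝ) + 1)) := by ring
    linarith [hmle]
  have hcauchy : CauchySeq μseq := by
    rw [Metric.cauchySeq_iff']
    intro ε hε
    obtain ⟨N, hN⟩ := exists_nat_gt (4 / ε ^ 2)
    refine ⟨N, fun n hn => ?_⟩
    have hNp : (0:ℝ) < (N : ℝ) + 1 := by positivity
    have h4 : 4 / ((N : ℝ) + 1) < ε ^ 2 := by
      rw [div_lt_iff₀ hNp]
      have h5 : 4 / ε ^ 2 < (N : ℝ) + 1 := by linarith
      have h6 : 4 / ε ^ 2 * ε ^ 2 < ((N:ℝ) + 1) * ε ^ 2 :=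
        mul_lt_mul_of_pos_right h5 (by positivity)
      have h7 : 4 / ε ^ 2 * ε ^ 2 = 4 := by field_simp
      have h8 : ε ^ 2 * ((N:ℝ) + 1) = ((N:ℝ) + 1) * ε ^ 2 := mul_comm _ _
      linarith
    have hcast : ((N : ℝ) + 1) ≤ (n : ℝ) + 1 := by exact_mod_cast Nat.succ_le_succ hn
    have hmono : (2:ℝ) / ((n : ℝ) + 1) ≤ 2 / ((N : ℝ) + 1) := by gcongr
    have hsq : dist (μseq n) (μseq N) ^ 2 < ε ^ 2 := by
      have hk := hkey n N
      have e4 : (4:ℝ) / ((N:ℝ) + 1) = 2 / ((N:ℝ) + 1) + 2 / ((N:ℝ) + 1) := by ring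
      linarith
    nlinarith [dist_nonneg (x := μseq n) (y := μseq N)]
  obtain ⟨μs, hμs⟩ := cauchySeq_tendsto_of_complete hcauchy
  -- boundedness of sequence
  have hb : ∀ n : ℕ, dist u (μseq n) ≤ dist u (μseq 0) + 2 := by
    intro n
    have h0 := hkey 0 n
    norm_num at h0
    have h3 : (2:ℝ) / ((n : ℝ) + 1) ≤ 2 := by
      rw [div_le_iff₀ (by positivity)]
      have hnn : (0:ℝ) ≤ (n : ℝ) := Nat.cast_nonneg n
      nlinarith
    have h4 : dist (μseq 0) (μseq n) ≤ 2 := by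
      nlinarith [dist_nonneg (x := μseq 0) (y := μseq n)]
    calc dist u (μseq n) ≤ dist u (μseq 0) + dist (μseq 0) (μseq n) := dist_triangle _ _ _
      _ ≤ dist u (μseq 0) + 2 := by linarith
  -- F along sequence tends to F μs
  have htendF : Tendsto (fun n => F (μseq n)) atTop (nhds (F μs)) := by
    apply tendsto_integral_of_dominated_convergence
      (fun ω => 2 * dist (X ω) u ^ 2 + 2 * (dist u (μseq 0) + 2) ^ 2)
      (fun n => hm (μseq n))
      ((hint.const_mul 2).add (integrable_const _))
    · intro n
      refine ae_of_all _ fun ω => ?_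
      rw [Real.norm_eq_abs, abs_of_nonneg (by positivity)]
      have h1 := hptw u (μseq n) ω
      have h2 : dist u (μseq n) ^ 2 ≤ (dist u (μseq 0) + 2) ^ 2 := by
        have := hb n
        nlinarith [dist_nonneg (x := u) (y := μseq n)]
      linarith
    · refine ae_of_all _ fun ω => ?_
      exact (((continuous_const.dist continuous_id).pow 2).tendsto μs).comp hμs
  -- F along sequence tends to I
  have htendI : Tendsto (fun n => F (μseq n)) atTop (nhds I) := by
    refine tendsto_of_tendsto_of_tendsto_of_le_of_le
      (g := fun _ : ℕ => I) (h := fun n : ℕ => I + 1 / ((n : ℝ) + 1))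
      tendsto_const_nhds ?_ (fun n => by exact hI_le (μseq n))
      (fun n => by exact (hseq n).le)
    have h1 := tendsto_one_div_add_atTop_nhds_zero_nat (𝕜 := ℝ)
    have h := (tendsto_const_nhds : Tendsto (fun _ : ℕ => I) atTop (nhds I)).add h1
    simpa using h
  have hFμs : F μs = I := tendsto_nhds_unique htendF htendI
  -- conclusion
  refine ⟨μs, fun μ => ?_, fun y hy => ?_⟩
  · show F μs ≤ F μ
    rw [hFμs]; exact hI_le μ
  · -- uniqueness
    have h1 : F y ≤ F μs := hy μs
    have h2 : F μs ≤ F y := by rw [hFμs]; exact hI_le y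
    obtain ⟨m, hmle⟩ := hCN y μs
    have h3 : F y ≤ F m := hy m
    have h4 : dist y μs ^ 2 ≤ 0 := by linarith
    have h5 : dist y μs = 0 := by
      nlinarith [dist_nonneg (x := y) (y := μs)]
    exact dist_eq_zero.mp h5
end

section
/- Let (M, d) be a uniquely geodesic space satisfying: there exist C_U > 0 and α_U ∈ (0,1] with |d(p,q)cos(∠_p(u,q)) − d(p,r)cos(∠_p(u,r))| ≤ C_U·d(q,r)^{α_U} for all p,q,r,u ∈ M (Alexandrov angles). Suppose moreover that the support of X is contained in a ball of radius R around μ. Then for all β, β' ∈ M and all x in the support of X, |h(β; x, μ) − h(β'; x, μ)| ≤ C_U·R·d(β, β')^{α_U}, where h(β; x, μ) = d(μ,x)·d(μ,β)·cos(∠_μ(x,β)). Consequently |E[Y·h(β;X,μ) − log(1+e^{h(β;X,μ)})] − E[Y·h(β';X,μ) − log(1+e^{h(β';X,μ)})]| ≤ 2·C_U·R·d(β,β')^{α_U}. -/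
open MeasureTheory

lemma log_one_add_exp_lip : LipschitzWith 1 (fun t : ℝ => Real.log (1 + Real.exp t)) := by
  have hd : ∀ t : ℝ, HasDerivAt (fun t : ℝ => Real.log (1 + Real.exp t))
      (Real.exp t / (1 + Real.exp t)) t := by
    intro t
    have h1 : HasDerivAt (fun t : ℝ => 1 + Real.exp t) (Real.exp t) t :=
      (Real.hasDerivAt_exp t).const_add 1
    exact h1.log (by positivity)
  have hdiff : Differentiable ℝ (fun t : ℝ => Real.log (1 + Real.exp t)) :=
    fun t => (hd t).differentiableAt
  apply lipschitzWith_of_nnnorm_deriv_le hdiff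
  intro t
  rw [(hd t).deriv]
  rw [← NNReal.coe_le_coe]
  simp only [coe_nnnorm, NNReal.coe_one, Real.norm_eq_abs]
  rw [abs_of_nonneg (by positivity)]
  rw [div_le_one (by positivity)]
  linarith [Real.exp_pos t]

theorem stmt16 {M Ω : Type*} [MetricSpace M] [MeasurableSpace Ω]
    (angle : M → M → M → ℝ)
    (CU αU : ℝ) (hCU : 0 < CU) (hαU : αU ∈ Set.Ioc (0 : ℝ) 1)
    (hlip : ∀ p q r u : M,
      |dist p q * Real.cos (angle p u q) - dist p r * Real.cos (angle p u r)| ≤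
        CU * dist q r ^ αU)
    (P : Measure Ω) [IsProbabilityMeasure P]
    (X : Ω → M) (Y : Ω → ℝ) (hY01 : ∀ ω, Y ω = 0 ∨ Y ω = 1)
    (μm : M) (R : ℝ) (hR : 0 < R) (hsupp : ∀ ω, dist μm (X ω) ≤ R)
    (hint : ∀ β : M, Integrable (fun ω =>
      Y ω * (dist μm (X ω) * dist μm β * Real.cos (angle μm (X ω) β)) -
        Real.log (1 + Real.exp
          (dist μm (X ω) * dist μm β * Real.cos (angle μm (X ω) β)))) P) :
    (∀ (β β' : M) (ω : Ω),
      |dist μm (X ω) * dist μm β * Real.cos (angle μm (X ω) β) -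
          dist μm (X ω) * dist μm β' * Real.cos (angle μm (X ω) β')| ≤
        CU * R * dist β β' ^ αU) ∧
    ∀ β β' : M,
      |(∫ ω, (Y ω * (dist μm (X ω) * dist μm β * Real.cos (angle μm (X ω) β)) -
            Real.log (1 + Real.exp
              (dist μm (X ω) * dist μm β * Real.cos (angle μm (X ω) β)))) ∂P) -
          ∫ ω, (Y ω * (dist μm (X ω) * dist μm β' * Real.cos (angle μm (X ω) β')) -
            Real.log (1 + Real.exp
              (dist μm (X ω) * dist μm β' * Real.cos (angle μm (X ω) β')))) ∂P| ≤
        2 * CU * R * dist β β' ^ αU := by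
  have key : ∀ (β β' : M) (ω : Ω),
      |dist μm (X ω) * dist μm β * Real.cos (angle μm (X ω) β) -
          dist μm (X ω) * dist μm β' * Real.cos (angle μm (X ω) β')| ≤
        CU * R * dist β β' ^ αU := by
    intro β β' ω
    have h1 := hlip μm β β' (X ω)
    have hd : (0:ℝ) ≤ dist μm (X ω) := dist_nonneg
    calc |dist μm (X ω) * dist μm β * Real.cos (angle μm (X ω) β) -
          dist μm (X ω) * dist μm β' * Real.cos (angle μm (X ω) β')|
        = dist μm (X ω) * |dist μm β * Real.cos (angle μm (X ω) β) -
            dist μm β' * Real.cos (angle μm (X ω) β')| := by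
          rw [show dist μm (X ω) * dist μm β * Real.cos (angle μm (X ω) β) -
              dist μm (X ω) * dist μm β' * Real.cos (angle μm (X ω) β') =
              dist μm (X ω) * (dist μm β * Real.cos (angle μm (X ω) β) -
              dist μm β' * Real.cos (angle μm (X ω) β')) by ring,
            abs_mul, abs_of_nonneg hd]
      _ ≤ R * (CU * dist β β' ^ αU) := by
          apply mul_le_mul (hsupp ω) h1 (abs_nonneg _)
          exact hR.le
      _ = CU * R * dist β β' ^ αU := by ring
  refine ⟨key, fun β β' => ?_⟩
  set f := fun ω => Y ω * (dist μm (X ω) * dist μm β * Real.cos (angle μm (X ω) β)) -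
        Real.log (1 + Real.exp
          (dist μm (X ω) * dist μm β * Real.cos (angle μm (X ω) β)))
  set g := fun ω => Y ω * (dist μm (X ω) * dist μm β' * Real.cos (angle μm (X ω) β')) -
        Real.log (1 + Real.exp
          (dist μm (X ω) * dist μm β' * Real.cos (angle μm (X ω) β')))
  have hbound : ∀ ω, |f ω - g ω| ≤ 2 * CU * R * dist β β' ^ αU := by
    intro ω
    set h := dist μm (X ω) * dist μm β * Real.cos (angle μm (X ω) β)
    set h' := dist μm (X ω) * dist μm β' * Real.cos (angle μm (X ω) β')
    have hkey := key β β' ω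
    have hY : |Y ω| ≤ 1 := by rcases hY01 ω with h | h <;> rw [h] <;> norm_num
    have hlog : |Real.log (1 + Real.exp h) - Real.log (1 + Real.exp h')| ≤ |h - h'| := by
      have := log_one_add_exp_lip.dist_le_mul h h'
      simpa [Real.dist_eq] using this
    calc |f ω - g ω| = |Y ω * (h - h') -
          (Real.log (1 + Real.exp h) - Real.log (1 + Real.exp h'))| := by
          simp only [f, g, h, h']; ring_nf
      _ ≤ |Y ω * (h - h')| + |Real.log (1 + Real.exp h) - Real.log (1 + Real.exp h')| :=
          abs_sub _ _
      _ ≤ |h - h'| + |h - h'| := by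
          refine add_le_add ?_ hlog
          rw [abs_mul]
          exact mul_le_of_le_one_left (abs_nonneg _) hY
      _ ≤ CU * R * dist β β' ^ αU + CU * R * dist β β' ^ αU := by gcongr
      _ = 2 * CU * R * dist β β' ^ αU := by ring
  rw [← integral_sub (hint β) (hint β')]
  calc |∫ ω, (f ω - g ω) ∂P| ≤ 2 * CU * R * dist β β' ^ αU := by
        have := norm_integral_le_of_norm_le_const (μ := P)
          (C := 2 * CU * R * dist β β' ^ αU)
          (f := fun ω => f ω - g ω)
          (Filter.Eventually.of_forall (fun ω => by
            simpa [Real.norm_eq_abs] using hbound ω))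
        simpa [Real.norm_eq_abs, measure_univ] using this
end
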